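/- If n ≥ 2 angles θ₁,…,θₙ on the unit circle are all contained in a closed arc of length γ ∈ [0, π], then the magnitude r = (1/n)|∑ⱼ exp(i θⱼ)| of their order parameter satisfies cos(γ/2) ≤ r ≤ 1. -/

import Mathlib

open Real Complex Finset

/-- If `n ≥ 2` angles are all contained in a closed arc of length `γ ∈ [0, π]`,
then the magnitude of their order parameter satisfies `cos (γ/2) ≤ r ≤ 1`. -/
theorem stmt_0 (n : ℕ) (hn : 2 ≤ n) (θ : Fin n → ℝ) (γ : ℝ)
    (hγ : γ ∈ Set.Icc (0:ℝ) π)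
    (harc : ∃ c : ℝ, ∀ j, θ j ∈ Set.Icc c (c + γ))
    (r : ℝ)
    (hr : r = (1 / n) * ‖∑ j, Complex.exp (Complex.I * (θ j : ℂ))‖) :
    Real.cos (γ / 2) ≤ r ∧ r ≤ 1 := by
  obtain ⟨hγ0, hγπ⟩ := hγ
  obtain ⟨c, hc⟩ := harc
  have hnpos : (0:ℝ) < n := by positivity
  set S : ℂ := ∑ j, Complex.exp (Complex.I * (θ j : ℂ)) with hS
  have habs_le : ‖S‖ ≤ n := by
    calc ‖S‖ ≤ ∑ j : Fin n, ‖Complex.exp (Complex.I * (θ j : ℂ))‖ :=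
          norm_sum_le _ _
      _ = ∑ j : Fin n, 1 := by
          refine Finset.sum_congr rfl fun j _ => ?_
          rw [mul_comm, Complex.norm_exp_ofReal_mul_I]
      _ = n := by simp
  constructor
  · -- lower bound
    set m : ℝ := c + γ / 2
    have key : (n : ℝ) * Real.cos (γ / 2) ≤ ‖S‖ := by
      have h1 : (Complex.exp (-(Complex.I * (m:ℂ))) * S).re ≤ ‖S‖ := by
        calc (Complex.exp (-(Complex.I * (m:ℂ))) * S).re
            ≤ ‖Complex.exp (-(Complex.I * (m:ℂ))) * S‖ := Complex.re_le_norm _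
          _ = ‖S‖ := by
              rw [norm_mul]
              have : ‖Complex.exp (-(Complex.I * (m:ℂ)))‖ = 1 := by
                rw [show -(Complex.I * (m:ℂ)) = ((-m : ℝ) : ℂ) * Complex.I by push_cast; ring]
                exact Complex.norm_exp_ofReal_mul_I _
              rw [this, one_mul]
      have h2 : (Complex.exp (-(Complex.I * (m:ℂ))) * S).re
          = ∑ j : Fin n, Real.cos (θ j - m) := by
        rw [hS, Finset.mul_sum, Complex.re_sum]
        refine Finset.sum_congr rfl fun j _ => ?_
        rw [← Complex.exp_add]
        have : -(Complex.I * (m:ℂ)) + Complex.I * (θ j : ℂ) = ((θ j - m : ℝ) : ℂ) * Complex.I := by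
          push_cast; ring
        rw [this, Complex.exp_ofReal_mul_I_re]
      have h3 : (n : ℝ) * Real.cos (γ / 2) ≤ ∑ j : Fin n, Real.cos (θ j - m) := by
        have : ∀ j : Fin n, Real.cos (γ / 2) ≤ Real.cos (θ j - m) := by
          intro j
          obtain ⟨hl, hu⟩ := hc j
          have habs : |θ j - m| ≤ γ / 2 := by
            rw [abs_le]; constructor <;> simp only [m] at * <;> linarith
          calc Real.cos (γ / 2) ≤ Real.cos |θ j - m| := by
                apply Real.cos_le_cos_of_nonneg_of_le_pi (abs_nonneg _) (by linarith) habs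
            _ = Real.cos (θ j - m) := Real.cos_abs _
        calc (n : ℝ) * Real.cos (γ / 2) = ∑ _j : Fin n, Real.cos (γ / 2) := by
              simp [mul_comm]
          _ ≤ _ := Finset.sum_le_sum fun j _ => this j
      linarith [h2 ▸ h1]
    rw [hr]
    have : (1 / n : ℝ) * ((n:ℝ) * Real.cos (γ/2)) ≤ (1 / n) * ‖S‖ := by
      apply mul_le_mul_of_nonneg_left key (by positivity)
    calc Real.cos (γ / 2) = (1 / n : ℝ) * ((n:ℝ) * Real.cos (γ/2)) := by
          field_simp
      _ ≤ _ := this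
  · rw [hr]
    calc (1 / n : ℝ) * ‖S‖ ≤ (1 / n) * n := by
          apply mul_le_mul_of_nonneg_left habs_le (by positivity)
      _ = 1 := by field_simp
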